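/- Let K be a field with ultrametric valuation v and φ ∈ K[x] a polynomial of degree d ≥ 2 with good reduction at v. If α lies in an algebraic extension K' of K and v'(α) < 0 for some extension v' of v to K', then α is not preperiodic for φ (i.e., the forward orbit {φ^∘n(α) : n ≥ 0} is infinite). -/

import Mathlib

open Polynomial

/-- Let `K` be a field with an (additive, ultrametric) valuation `v` and
`φ ∈ K[x]` a polynomial of degree `d ≥ 2` with good reduction at `v` (coefficients of
nonnegative valuation, leading coefficient of valuation `0`).  If `α` lies in an algebraic
extension `K'` of `K` and `v'(α) < 0` for some extension `v'` of `v` to `K'`, then `α` is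
not preperiodic for `φ`: the forward orbit `{φ^∘n(α) : n ≥ 0}` is infinite. -/
theorem stmt_6 {K K' : Type*} [Field K] [Field K'] [Algebra K K']
    (halg : Algebra.IsAlgebraic K K')
    {Γ : Type*} [AddCommGroup Γ] [LinearOrder Γ] [IsOrderedAddMonoid Γ]
    (v : AddValuation K (WithTop Γ)) (v' : AddValuation K' (WithTop Γ))
    (hext : ∀ x : K, v' (algebraMap K K' x) = v x)
    (φ : Polynomial K) (hdeg : 2 ≤ φ.natDegree)
    (hint : ∀ i, 0 ≤ v (φ.coeff i)) (hlead : v φ.leadingCoeff = 0)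
    (α : K') (hα : v' α < 0) :
    (Set.range fun n : ℕ => (fun x : K' => Polynomial.aeval x φ)^[n] α).Infinite := by
  set d := φ.natDegree with hd
  -- key step: applying φ strictly decreases the (negative) valuation
  have hstep : ∀ β : K', v' β < 0 → v' (Polynomial.aeval β φ) < v' β := by
    intro β hβ
    have hne : v' β ≠ ⊤ := (hβ.trans_le le_top).ne
    obtain ⟨γ, hγ⟩ := WithTop.ne_top_iff_exists.mp hne
    have hγneg : γ < 0 := by
      have : (γ : WithTop Γ) < (0 : WithTop Γ) := by rw [hγ]; exact hβ
      exact_mod_cast this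
    have haeval : Polynomial.aeval β φ =
        (∑ i ∈ Finset.range d, φ.coeff i • β ^ i) + φ.coeff d • β ^ d := by
      rw [Polynomial.aeval_eq_sum_range, Finset.sum_range_succ]
    -- valuation of the i-th term
    have hterm : ∀ i : ℕ, ((i • γ : Γ) : WithTop Γ) ≤ v' (φ.coeff i • β ^ i) := by
      intro i
      rw [Algebra.smul_def, v'.map_mul, hext, v'.map_pow, ← hγ]
      calc ((i • γ : Γ) : WithTop Γ) = 0 + ((i • γ : Γ) : WithTop Γ) := by rw [zero_add]
        _ ≤ v (φ.coeff i) + i • ((γ : WithTop Γ)) := by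
            apply add_le_add (hint i)
            simp
    have htop : v' (φ.coeff d • β ^ d) = ((d • γ : Γ) : WithTop Γ) := by
      rw [Algebra.smul_def, v'.map_mul, hext, v'.map_pow, ← hγ]
      have : φ.coeff d = φ.leadingCoeff := rfl
      rw [this, hlead, zero_add]
      simp
    -- valuation of the lower sum is strictly bigger than d • γ
    have hlow : ((d • γ : Γ) : WithTop Γ) < v' (∑ i ∈ Finset.range d, φ.coeff i • β ^ i) := by
      apply AddValuation.map_lt_sum v' (by exact WithTop.coe_ne_top)
      intro i hi
      refine lt_of_lt_of_le ?_ (hterm i)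
      have hi' : i < d := Finset.mem_range.mp hi
      have : d • γ < i • γ := by
        have := nsmul_lt_nsmul_left (neg_pos.mpr hγneg) hi'
        rw [smul_neg, smul_neg, neg_lt_neg_iff] at this
        exact this
      exact_mod_cast this
    have hval : v' (Polynomial.aeval β φ) = ((d • γ : Γ) : WithTop Γ) := by
      rw [haeval, ← htop]
      exact AddValuation.map_add_eq_of_lt_right v' (htop ▸ hlow)
    rw [hval, ← hγ]
    have : d • γ < γ := by
      calc d • γ ≤ 2 • γ := by
            have := nsmul_le_nsmul_left (le_of_lt (neg_pos.mpr hγneg)) hdeg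
            rw [smul_neg, smul_neg, neg_le_neg_iff] at this
            exact this
        _ = γ + γ := two_nsmul γ
        _ < γ + 0 := by exact add_lt_add_right hγneg γ
        _ = γ := add_zero γ
    exact_mod_cast this
  set f : ℕ → K' := fun n => (fun x : K' => Polynomial.aeval x φ)^[n] α with hf
  have key : ∀ n, v' (f (n + 1)) < v' (f n) ∧ v' (f n) < 0 := by
    intro n
    induction n with
    | zero =>
      refine ⟨?_, hα⟩
      have : f 1 = Polynomial.aeval (f 0) φ := by simp [hf]
      rw [this]; exact hstep _ hα
    | succ n ih =>
      have hlt : v' (f (n + 1)) < 0 := ih.1.trans ih.2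
      refine ⟨?_, hlt⟩
      have : f (n + 2) = Polynomial.aeval (f (n + 1)) φ := by
        simp [hf, Function.iterate_succ_apply']
      rw [this]; exact hstep _ hlt
  have hanti : StrictAnti (fun n => v' (f n)) :=
    strictAnti_nat_of_succ_lt fun n => (key n).1
  have hinj : Function.Injective f := fun a b h => hanti.injective (by simp [h])
  exact Set.infinite_range_of_injective hinj
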